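/- Let P be a piecewise continuous (or integrable) function on [-1,1]. Then P is symmetric (i.e. P(-t) = P(t) for almost every t) if and only if ∫_{-1}^{1} t^{2k+1} P(t) dt = 0 for every natural number k. -/

import Mathlib

open MeasureTheory

section Aux
open Set Filter Metric Topology

lemma neg_map_restrict :
    Measure.map (fun x : ℝ => -x) (volume.restrict (Set.Icc (-1:ℝ) 1)) =
      volume.restrict (Set.Icc (-1:ℝ) 1) := by
  have h1 : (fun x : ℝ => -x) ⁻¹' (Set.Icc (-1:ℝ) 1) = Set.Icc (-1:ℝ) 1 := by
    rw [show ((fun x : ℝ => -x) ⁻¹' (Set.Icc (-1:ℝ) 1)) = -(Set.Icc (-1:ℝ) 1) from rfl,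
      Set.neg_Icc]
    norm_num
  conv_lhs => rw [← h1]
  rw [← Measure.restrict_map measurable_neg measurableSet_Icc,
    Measure.map_neg_eq_self (volume : Measure ℝ)]

lemma integral_comp_neg_Icc' (f : ℝ → ℝ) :
    ∫ t in Set.Icc (-1:ℝ) 1, f (-t) = ∫ t in Set.Icc (-1:ℝ) 1, f t := by
  have A : MeasurableEmbedding fun x : ℝ => -x :=
    (Homeomorph.neg ℝ).isClosedEmbedding.measurableEmbedding
  conv_rhs => rw [← neg_map_restrict, A.integral_map]

lemma pow_mul_integrable (Q : ℝ → ℝ)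
    (hQ : Integrable Q (volume.restrict (Set.Icc (-1:ℝ) 1))) (n : ℕ) :
    Integrable (fun t => t ^ n * Q t) (volume.restrict (Set.Icc (-1:ℝ) 1)) := by
  apply Integrable.bdd_mul (c := 1) hQ ((continuous_pow n).aestronglyMeasurable)
  filter_upwards [ae_restrict_mem measurableSet_Icc] with t ht
  rw [Real.norm_eq_abs, abs_pow]
  exact pow_le_one₀ (abs_nonneg t) (abs_le.mpr ⟨ht.1, ht.2⟩)

lemma cont_mul_integrable (Q g : ℝ → ℝ)
    (hQ : Integrable Q (volume.restrict (Set.Icc (-1:ℝ) 1)))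
    (hg : Continuous g) :
    Integrable (fun t => g t * Q t) (volume.restrict (Set.Icc (-1:ℝ) 1)) := by
  obtain ⟨C, hC⟩ := isCompact_Icc.exists_bound_of_continuousOn
    (hg.continuousOn (s := Set.Icc (-1:ℝ) 1))
  apply Integrable.bdd_mul (c := C) hQ hg.aestronglyMeasurable
  filter_upwards [ae_restrict_mem measurableSet_Icc] with t ht
  exact hC t ht

lemma poly_integral_zero (Q : ℝ → ℝ)
    (hQ : Integrable Q (volume.restrict (Set.Icc (-1:ℝ) 1)))
    (hm : ∀ n : ℕ, ∫ t in Set.Icc (-1:ℝ) 1, t ^ n * Q t = 0) (p : Polynomial ℝ) :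
    ∫ t in Set.Icc (-1:ℝ) 1, p.eval t * Q t = 0 := by
  have h1 : ∀ t : ℝ, p.eval t * Q t =
      ∑ i ∈ Finset.range (p.natDegree + 1), p.coeff i * (t ^ i * Q t) := by
    intro t
    rw [Polynomial.eval_eq_sum_range, Finset.sum_mul]
    exact Finset.sum_congr rfl fun i _ => by ring
  simp only [h1]
  rw [integral_finset_sum]
  · apply Finset.sum_eq_zero
    intro i _
    rw [MeasureTheory.integral_const_mul, hm i, mul_zero]
  · intro i _
    exact (pow_mul_integrable Q hQ i).const_mul _

lemma ae_zero_of_forall_cont (Q : ℝ → ℝ)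
    (hQ : Integrable Q (volume.restrict (Set.Icc (-1:ℝ) 1)))
    (h : ∀ g : ℝ → ℝ, Continuous g →
      ∫ t in Set.Icc (-1:ℝ) 1, g t * Q t = 0) :
    Q =ᵐ[volume.restrict (Set.Icc (-1:ℝ) 1)] 0 := by
  set μ := volume.restrict (Set.Icc (-1:ℝ) 1) with hμ
  apply ae_eq_zero_of_forall_setIntegral_isClosed_eq_zero hQ
  intro s hs
  rcases s.eq_empty_or_nonempty with rfl | hne
  · simp
  · set g : ℕ → ℝ → ℝ := fun n t => max (1 - (n+1 : ℝ) * infDist t s) 0 with hg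
    have hgc : ∀ n, Continuous (g n) :=
      fun n => ((continuous_const.sub (continuous_const.mul
        (continuous_infDist_pt s))).max continuous_const)
    have hg01 : ∀ n t, 0 ≤ g n t ∧ g n t ≤ 1 := by
      intro n t
      constructor
      · exact le_max_right _ _
      · apply max_le _ zero_le_one
        have : 0 ≤ (n+1 : ℝ) * infDist t s :=
          mul_nonneg (by positivity) infDist_nonneg
        linarith
    have key : Tendsto (fun n => ∫ t, g n t * Q t ∂μ) atTop
        (𝓝 (∫ t, s.indicator Q t ∂μ)) := by
      apply tendsto_integral_of_dominated_convergence (fun t => |Q t|)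
      · intro n
        exact ((hgc n).aestronglyMeasurable).mul hQ.1
      · exact hQ.abs
      · intro n
        filter_upwards with t
        rw [Real.norm_eq_abs, abs_mul]
        calc |g n t| * |Q t| ≤ 1 * |Q t| := by
              apply mul_le_mul_of_nonneg_right _ (abs_nonneg _)
              rw [abs_of_nonneg (hg01 n t).1]; exact (hg01 n t).2
          _ = |Q t| := one_mul _
      · filter_upwards with t
        by_cases ht : t ∈ s
        · have : ∀ n, g n t * Q t = Q t := by
            intro n
            simp [hg, infDist_zero_of_mem ht]
          simp only [this, Set.indicator_of_mem ht]
          exact tendsto_const_nhds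
        · have hd : 0 < infDist t s := (hs.notMem_iff_infDist_pos hne).1 ht
          rw [Set.indicator_of_notMem ht]
          apply Tendsto.congr' _ tendsto_const_nhds
          have : ∀ᶠ n : ℕ in atTop, (1:ℝ) ≤ (n+1 : ℝ) * infDist t s := by
            have : Tendsto (fun n : ℕ => (n+1 : ℝ) * infDist t s) atTop atTop := by
              apply Tendsto.atTop_mul_const hd
              exact tendsto_atTop_add_const_right _ _ tendsto_natCast_atTop_atTop
            exact this.eventually_ge_atTop 1
          filter_upwards [this] with n hn
          have : g n t = 0 := by
            rw [hg]; simp only; rw [max_eq_right]; linarith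
          rw [this, zero_mul]
    have h0 : ∀ n, ∫ t, g n t * Q t ∂μ = 0 := fun n => h (g n) (hgc n)
    simp only [h0] at key
    have := tendsto_nhds_unique key tendsto_const_nhds
    rwa [integral_indicator hs.measurableSet] at this
lemma cont_integral_zero (Q : ℝ → ℝ)
    (hQ : Integrable Q (volume.restrict (Set.Icc (-1:ℝ) 1)))
    (hm : ∀ n : ℕ, ∫ t in Set.Icc (-1:ℝ) 1, t ^ n * Q t = 0)
    (g : ℝ → ℝ) (hg : Continuous g) :
    ∫ t in Set.Icc (-1:ℝ) 1, g t * Q t = 0 := by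
  set μ := volume.restrict (Set.Icc (-1:ℝ) 1) with hμ
  set I := ∫ t in Set.Icc (-1:ℝ) 1, g t * Q t with hI
  set C := ∫ t in Set.Icc (-1:ℝ) 1, |Q t| with hC
  have hC0 : 0 ≤ C := integral_nonneg fun t => abs_nonneg _
  have key : ∀ ε : ℝ, 0 < ε → |I| ≤ ε * C := by
    intro ε hε
    obtain ⟨p, hp⟩ := exists_polynomial_near_of_continuousOn (-1) 1 g
      hg.continuousOn ε hε
    have hpz := poly_integral_zero Q hQ hm p
    have hsub : I = ∫ t in Set.Icc (-1:ℝ) 1, (g t - p.eval t) * Q t := by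
      rw [hI]
      rw [show (fun t => (g t - Polynomial.eval t p) * Q t) =
        (fun t => g t * Q t - Polynomial.eval t p * Q t) from funext fun t => by ring]
      rw [integral_sub (cont_mul_integrable Q g hQ hg)
        (cont_mul_integrable Q _ hQ (Polynomial.continuous p)), hpz, sub_zero]
    rw [hsub]
    calc |∫ t in Set.Icc (-1:ℝ) 1, (g t - p.eval t) * Q t|
        ≤ ∫ t in Set.Icc (-1:ℝ) 1, |(g t - p.eval t) * Q t| :=
          by
            simpa [Real.norm_eq_abs, abs_mul] using
 norm_integral_le_integral_norm (μ := volume.restrict (Set.Icc (-1:ℝ) 1))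
                (fun t => (g t - p.eval t) * Q t)
      _ ≤ ∫ t in Set.Icc (-1:ℝ) 1, ε * |Q t| := by
          apply integral_mono_ae
          · exact (cont_mul_integrable Q _ hQ
              (hg.sub (Polynomial.continuous p))).abs
          · exact hQ.abs.const_mul ε
          · filter_upwards [ae_restrict_mem measurableSet_Icc] with t ht
            rw [abs_mul]
            apply mul_le_mul_of_nonneg_right _ (abs_nonneg _)
            have := hp t ht
            rw [abs_sub_comm]
            exact this.le
      _ = ε * C := by rw [hC, integral_const_mul]
  have : |I| ≤ 0 := by
    by_contra hlt
    push_neg at hlt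
    have h1 := key (|I| / (2 * (C + 1))) (by positivity)
    have h2 : |I| / (2 * (C + 1)) * C < |I| := by
      rw [div_mul_eq_mul_div, div_lt_iff₀ (by positivity)]
      nlinarith
    linarith
  have := abs_nonneg I
  have : |I| = 0 := le_antisymm ‹|I| ≤ 0› (abs_nonneg I)
  exact abs_eq_zero.mp this
end Aux

section Main
open Set Filter Metric Topology
/-- An integrable function on `[-1,1]` is symmetric (even) a.e. iff all its odd
moments vanish. -/
theorem odd_moments_vanish_iff_symmetric (P : ℝ → ℝ)
    (hP : IntegrableOn P (Set.Icc (-1 : ℝ) 1)) :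
    (∀ᵐ t ∂(volume.restrict (Set.Icc (-1 : ℝ) 1)), P (-t) = P t) ↔
      (∀ k : ℕ, ∫ t in Set.Icc (-1 : ℝ) 1, t ^ (2 * k + 1) * P t = 0) := by
  have A : MeasurableEmbedding fun x : ℝ => -x :=
    (Homeomorph.neg ℝ).isClosedEmbedding.measurableEmbedding
  have hPneg : Integrable (fun t => P (-t)) (volume.restrict (Set.Icc (-1:ℝ) 1)) := by
    have := (A.integrable_map_iff (g := P)
      (μ := volume.restrict (Set.Icc (-1:ℝ) 1))).mp
    rw [neg_map_restrict] at this
    exact this hP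
  constructor
  · intro h k
    have h1 := integral_comp_neg_Icc' (fun t => t ^ (2*k+1) * P t)
    have h2 : ∫ t in Set.Icc (-1:ℝ) 1, (-t) ^ (2*k+1) * P (-t) =
        ∫ t in Set.Icc (-1:ℝ) 1, -(t ^ (2*k+1) * P t) := by
      apply integral_congr_ae
      filter_upwards [h] with t ht
      rw [ht, Odd.neg_pow ⟨k, by ring⟩]
      ring
    rw [h2, integral_neg] at h1
    linarith
  · intro hm
    set Q : ℝ → ℝ := fun t => P t - P (-t) with hQdef
    have hQ : Integrable Q (volume.restrict (Set.Icc (-1:ℝ) 1)) := hP.sub hPneg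
    have hmom : ∀ n : ℕ, ∫ t in Set.Icc (-1:ℝ) 1, t ^ n * Q t = 0 := by
      intro n
      have hsplit : ∫ t in Set.Icc (-1:ℝ) 1, t ^ n * Q t =
          (∫ t in Set.Icc (-1:ℝ) 1, t ^ n * P t) -
            ∫ t in Set.Icc (-1:ℝ) 1, t ^ n * P (-t) := by
        rw [← integral_sub (pow_mul_integrable P hP n)
          (pow_mul_integrable _ hPneg n)]
        apply integral_congr_ae
        filter_upwards with t
        simp only [hQdef]
        ring
      have hneg : ∫ t in Set.Icc (-1:ℝ) 1, t ^ n * P (-t) =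
          ∫ t in Set.Icc (-1:ℝ) 1, (-t) ^ n * P t := by
        rw [← integral_comp_neg_Icc' (fun t => (-t) ^ n * P t)]
        simp [neg_neg]
      rcases Nat.even_or_odd n with he | ho
      · rw [hsplit, hneg]
        have : ∀ t : ℝ, (-t) ^ n = t ^ n := fun t => he.neg_pow t
        simp only [this, sub_self]
      · obtain ⟨k, hk⟩ := ho
        rw [hsplit, hneg]
        have h1 : ∀ t : ℝ, (-t) ^ n = -(t ^ n) := fun t => Odd.neg_pow ⟨k, by omega⟩ t
        simp only [h1]
        have h2 : ∫ t in Set.Icc (-1:ℝ) 1, -(t ^ n) * P t =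
            -∫ t in Set.Icc (-1:ℝ) 1, t ^ n * P t := by
          rw [← integral_neg]
          congr 1
          funext t
          ring
        rw [h2]
        have h3 : ∫ t in Set.Icc (-1:ℝ) 1, t ^ n * P t = 0 := by
          have := hm k
          rwa [show 2 * k + 1 = n by omega] at this
        rw [h3]
        ring
    have hae := ae_zero_of_forall_cont Q hQ (cont_integral_zero Q hQ hmom)
    filter_upwards [hae] with t ht
    have : P t - P (-t) = 0 := ht
    linarith
end Main
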